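/- arXiv:0807.4065 — 3 statements merged into one kernel-verified Lean document; each statement's English description precedes it below -/
import Mathlib

section
/- Let T = {t_{𝔭_1}, …, t_{𝔭_g}} be the set of f-complete types produced by Montes' algorithm, in bijection with the primes 𝔭_1,…,𝔭_g of Z_K above p, and for each 𝔭 let β_𝔭 ∈ K be the element with v_𝔭(β_𝔭) = 1 constructed from t_𝔭. Define recursively, starting from the types maximal for the dominance ordering (for which α̃_𝔭 := β_𝔭): α̃_𝔭 := β_𝔭 · ∏_{t_𝔮 > t_𝔭} α̃_𝔮^{−v_𝔮(β_𝔭)}. Then for all primes 𝔭, 𝔮 of Z_K above p: v_𝔮(α̃_𝔭) = 1 if 𝔮 = 𝔭, and v_𝔮(α̃_𝔭) = 0 otherwise. -/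
open NumberField IsDedekindDomain Polynomial
open scoped Multiplicative
open scoped WithZero

/-- **Multipliers `α̃_𝔭` attached to the output of Montes' algorithm.**
Let `q 1, …, q g` be the prime ideals of `𝓞 K` above `p`, in bijection with the complete
types produced by Montes' algorithm, and for each `i` let `β i ∈ K` be the element attached
to `q i`, with `v_{q i}(β i) = 1` (`n j i` denotes `v_{q j}(β i)`).  Let `D j i` be the
dominance relation «`t_{q j}` dominates `t_{q i}`» (a strict partial order), so that
`n j i = 0` whenever `j ≠ i` and `¬ D j i`.  If `α̃` satisfies the recursion
`α̃ i = β i · ∏_{D j i} (α̃ j)^{−n j i}` (starting from the dominance-maximal types, for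
which the product is empty), then `v_{q j}(α̃ i) = 1` if `j = i` and `= 0` otherwise. -/
theorem stmt_10 (K : Type*) [Field K] [NumberField K] (p : ℕ) (hp : p.Prime)
    (f : Polynomial ℤ) (hf : f.Monic) (hfirr : Irreducible f)
    (θ : K) (hroot : Polynomial.aeval θ f = 0) (hgen : Algebra.adjoin ℚ {θ} = ⊤)
    (g : ℕ) (q : Fin g → HeightOneSpectrum (𝓞 K))
    (hqinj : Function.Injective q)
    (hqp : ∀ i, (p : 𝓞 K) ∈ (q i).asIdeal)
    (hqsurj : ∀ Q : HeightOneSpectrum (𝓞 K), (p : 𝓞 K) ∈ Q.asIdeal → ∃ i, q i = Q)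
    -- the dominance ordering on the complete types produced by the algorithm
    (D : Fin g → Fin g → Prop) [DecidableRel D]
    (hDirr : ∀ i, ¬ D i i) (hDtrans : ∀ i j k, D i j → D j k → D i k)
    -- the elements β_𝔭 and the integers n j i = v_{q j}(β i)
    (β : Fin g → K) (n : Fin g → Fin g → ℤ)
    (hn : ∀ i j, (q j).valuation K (β i)
      = (↑(Multiplicative.ofAdd (-(n j i))) : ℤᵐ⁰))
    (hself : ∀ i, n i i = 1)
    (hzero : ∀ i j, j ≠ i → ¬ D j i → n j i = 0)
    -- the recursively defined elements α̃
    (α : Fin g → K)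
    (hrec : ∀ i, α i = β i
      * ∏ j ∈ Finset.univ.filter (fun j => D j i), α j ^ (-(n j i))) :
    ∀ i j, (q j).valuation K (α i)
      = if j = i then (↑(Multiplicative.ofAdd (-1 : ℤ)) : ℤᵐ⁰) else 1 := by
    classical
  suffices h : ∀ N : ℕ, ∀ i, (Finset.univ.filter (fun j => D j i)).card ≤ N →
      ∀ j, (q j).valuation K (α i)
        = if j = i then (↑(Multiplicative.ofAdd (-1 : ℤ)) : ℤᵐ⁰) else 1 by
    intro i j
    exact h _ i le_rfl j
  intro N
  induction N with
  | zero =>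
    intro i hcard j
    have hempty : Finset.univ.filter (fun j => D j i) = ∅ :=
      Finset.card_eq_zero.mp (Nat.le_zero.mp hcard)
    have hai : α i = β i := by rw [hrec i, hempty, Finset.prod_empty, mul_one]
    rw [hai, hn i j]
    by_cases hji : j = i
    · subst hji; simp [hself]
    · have hD : ¬ D j i := by
        intro hD
        have hmem : j ∈ Finset.univ.filter (fun j => D j i) := by simp [hD]
        rw [hempty] at hmem
        exact absurd hmem (Finset.notMem_empty j)
      rw [hzero i j hji hD]
      simp [hji]
  | succ N ih =>
    intro i hcard j
    have hIH : ∀ k, D k i → ∀ j', (q j').valuation K (α k)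
        = if j' = k then (↑(Multiplicative.ofAdd (-1 : ℤ)) : ℤᵐ⁰) else 1 := by
      intro k hk
      apply ih
      have hsub : Finset.univ.filter (fun m => D m k)
          ⊂ Finset.univ.filter (fun m => D m i) := by
        constructor
        · intro m hm
          simp only [Finset.mem_filter, Finset.mem_univ, true_and] at *
          exact hDtrans m k i hm hk
        · intro hsub'
          have hk1 : k ∈ Finset.univ.filter (fun m => D m i) := by simp [hk]
          have := hsub' hk1
          simp only [Finset.mem_filter, Finset.mem_univ, true_and] at this
          exact hDirr k this
      have := Finset.card_lt_card hsub
      omega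
    have hval : (q j).valuation K (α i)
        = (q j).valuation K (β i) * ∏ k ∈ Finset.univ.filter (fun k => D k i),
            ((q j).valuation K (α k)) ^ (-(n k i)) := by
      rw [hrec i, map_mul, map_prod]
      simp_rw [map_zpow₀]
    rw [hval, hn i j]
    by_cases hji : j = i
    · subst hji
      have hprod : ∏ k ∈ Finset.univ.filter (fun k => D k j),
          ((q j).valuation K (α k)) ^ (-(n k j)) = 1 := by
        apply Finset.prod_eq_one
        intro k hk
        simp only [Finset.mem_filter, Finset.mem_univ, true_and] at hk
        have hne : j ≠ k := by rintro rfl; exact hDirr j hk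
        rw [hIH k hk j, if_neg hne, one_zpow]
      rw [hprod, mul_one, hself, if_pos rfl]
    · by_cases hD : D j i
      · have hprod : ∏ k ∈ Finset.univ.filter (fun k => D k i),
            ((q j).valuation K (α k)) ^ (-(n k i))
            = ((q j).valuation K (α j)) ^ (-(n j i)) := by
          apply Finset.prod_eq_single_of_mem j (by simp [hD])
          intro k hk hkj
          simp only [Finset.mem_filter, Finset.mem_univ, true_and] at hk
          rw [hIH k hk j, if_neg (fun h => hkj h.symm), one_zpow]
        rw [hprod, hIH j hD j, if_pos rfl, if_neg hji,
          ← WithZero.coe_zpow, ← WithZero.coe_mul]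
        rw [show (1 : ℤᵐ⁰) = ↑(1 : Multiplicative ℤ) from rfl]
        congr 1
        rw [← ofAdd_zsmul, ← ofAdd_add]
        simp [smul_eq_mul]
      · rw [hzero i j hji hD]
        have hprod : ∏ k ∈ Finset.univ.filter (fun k => D k i),
            ((q j).valuation K (α k)) ^ (-(n k i)) = 1 := by
          apply Finset.prod_eq_one
          intro k hk
          simp only [Finset.mem_filter, Finset.mem_univ, true_and] at hk
          have hne : j ≠ k := by rintro rfl; exact hD hk
          rw [hIH k hk j, if_neg hne, one_zpow]
        rw [hprod, mul_one, if_neg hji]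
        simp
end

section
/- Let t ≥ 1 and let (x_0, y_0), (x_1, y_1), …, (x_t, y_t) ∈ Z² with 0 = x_0 < x_1 < … < x_t and y_0 > y_1 > … > y_t, such that the slopes (y_i − y_{i−1})/(x_i − x_{i−1}) are strictly increasing in i. Let N : [0, x_t] → R be the piecewise linear convex function with these vertices, and set E_i = x_i − x_{i−1}, H_i = y_{i−1} − y_i, d_i = gcd(E_i, H_i). Then the number of points (a, b) ∈ Z² with 1 ≤ a ≤ x_t, b > y_t and b ≤ N(a) equals Σ_{i=1}^{t} (E_iH_i − E_i − H_i + d_i)/2 + Σ_{1 ≤ i < j ≤ t} E_iH_j. -/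
open Finset

lemma ceil_pair (E h k : ℤ) (hE : 0 < E) :
    ⌈(↑(h*k) : ℚ)/(E:ℚ)⌉ + ⌈(↑(h*(E-k)) : ℚ)/(E:ℚ)⌉ = h + (if E ∣ h*k then 0 else 1) := by
  have hE0 : (E:ℚ) ≠ 0 := by exact_mod_cast hE.ne'
  have h1 : (↑(h*(E-k)) : ℚ)/(E:ℚ) = (h:ℚ) + (-((↑(h*k):ℚ)/(E:ℚ))) := by
    push_cast; field_simp; ring
  rw [h1, add_comm ((h:ℚ)) _, Int.ceil_add_intCast, Int.ceil_neg]
  set q : ℚ := (↑(h*k) : ℚ)/(E:ℚ) with hq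
  by_cases hdvd : E ∣ h*k
  · obtain ⟨c, hc⟩ := hdvd
    have hqc : q = (c:ℚ) := by
      rw [hq, hc]; push_cast; field_simp
    rw [hqc]
    simp [Int.ceil_intCast, Int.floor_intCast, hc]
  · have h2 : ⌈q⌉ ≤ ⌊q⌋ + 1 := Int.ceil_le_floor_add_one q
    have h3 : ⌊q⌋ < ⌈q⌉ := by
      rw [Int.lt_ceil]
      refine lt_of_le_of_ne (Int.floor_le q) ?_
      intro heq
      apply hdvd
      have h4 : (⌊q⌋:ℚ) * (E:ℚ) = ((h*k : ℤ) : ℚ) := by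
        rw [heq, hq]; push_cast; field_simp
      have h5 : ⌊q⌋ * E = h * k := by exact_mod_cast h4
      exact ⟨⌊q⌋, by linarith⟩
    rw [if_neg hdvd]
    omega

lemma dvd_count (E h : ℤ) (hE : 0 < E) (hh : 0 < h) :
    #{k ∈ Finset.Ioc 0 E | E ∣ h*k} = Int.gcd E h := by
  set g : ℤ := (Int.gcd E h : ℤ) with hg
  have hgpos : 0 < g := by
    have h1 := Int.gcd_pos_of_ne_zero_left h hE.ne'
    simp only [hg]
    exact_mod_cast h1
  have hgE : g ∣ E := Int.gcd_dvd_left E h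
  have hgh : g ∣ h := Int.gcd_dvd_right E h
  obtain ⟨e, he⟩ := hgE
  obtain ⟨m, hm⟩ := hgh
  have hepos : 0 < e := by nlinarith
  have hcop : IsCoprime e m := by
    have h0 : 0 < Int.gcd E h := Int.gcd_pos_of_ne_zero_left h hE.ne'
    have := Int.gcd_div_gcd_div_gcd h0
    rw [Int.isCoprime_iff_gcd_eq_one]
    have he' : E / g = e := by rw [he]; exact Int.mul_ediv_cancel_left e hgpos.ne'
    have hm' : h / g = m := by rw [hm]; exact Int.mul_ediv_cancel_left m hgpos.ne'
    rw [← he', ← hm']; exact this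
  have key : ∀ k : ℤ, (E ∣ h*k ↔ e ∣ k) := by
    intro k
    constructor
    · intro ⟨c, hc⟩
      have h6 : e ∣ m * k := ⟨c, mul_left_cancel₀ hgpos.ne'
        (by rw [← mul_assoc, ← hm, hc, he]; ring)⟩
      exact hcop.dvd_of_dvd_mul_left h6
    · intro ⟨c, hc⟩
      exact ⟨m * c, by rw [hc, hm, he]; ring⟩
  have : {k ∈ Finset.Ioc 0 E | E ∣ h*k} = {k ∈ Finset.Ioc 0 E | e ∣ k} := by
    apply Finset.filter_congr; intro k _; simp [key k]
  rw [this]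
  have hcard := Int.Ioc_filter_dvd_card 0 E hepos
  have h0 : ((0:ℤ):ℚ) / (e:ℚ) = ((0:ℤ):ℚ) := by norm_num
  have hEe : ((E:ℤ):ℚ) / (e:ℚ) = ((g:ℤ):ℚ) := by
    rw [he]; push_cast
    rw [mul_comm]
    field_simp
  rw [h0, hEe, Int.floor_intCast, Int.floor_intCast, sub_zero,
    max_eq_left hgpos.le, hg] at hcard
  exact_mod_cast hcard

lemma ceil_sum_double (E h : ℤ) (hE : 0 < E) (hh : 0 < h) :
    2 * ∑ k ∈ Finset.Ioc 0 E, ⌈(↑(h*k):ℚ)/(E:ℚ)⌉ = E*h + E + h - Int.gcd E h := by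
  set f : ℤ → ℤ := fun k => ⌈(↑(h*k):ℚ)/(E:ℚ)⌉ with hf
  have hE0 : (E:ℚ) ≠ 0 := by exact_mod_cast hE.ne'
  have hf0 : f 0 = 0 := by simp [hf]
  have hfE : f E = h := by
    have h1 : (↑(h*E):ℚ)/(E:ℚ) = ((h:ℤ):ℚ) := by push_cast; field_simp
    show ⌈(↑(h*E):ℚ)/(E:ℚ)⌉ = h
    rw [h1, Int.ceil_intCast]
  have hrefl : ∑ k ∈ Finset.Ioc 0 E, f (E - k) = ∑ k ∈ Finset.Ico 0 E, f k := by
    apply Finset.sum_nbij' (i := fun k => E - k) (j := fun k => E - k) <;>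
      intros a ha <;> simp_all [Finset.mem_Ioc, Finset.mem_Ico] <;> omega
  have hsplit : ∑ k ∈ Finset.Ico 0 E, f k + f E = ∑ k ∈ Finset.Ioc 0 E, f k + f 0 := by
    rw [← Finset.Ioo_insert_left hE, ← Finset.Ioo_insert_right hE,
      Finset.sum_insert (by simp), Finset.sum_insert (by simp)]
    ring
  have hpair : ∑ k ∈ Finset.Ioc 0 E, (f k + f (E - k)) = E*h + (E - Int.gcd E h) := by
    have hcg : ∀ k ∈ Finset.Ioc 0 E, f k + f (E-k) = h + (if E ∣ h*k then 0 else 1) :=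
      fun k _ => ceil_pair E h k hE
    rw [Finset.sum_congr rfl hcg, Finset.sum_add_distrib, Finset.sum_const, Int.card_Ioc]
    have hsum_ite : ∑ k ∈ Finset.Ioc 0 E, (if E ∣ h*k then (0:ℤ) else 1)
        = E - Int.gcd E h := by
      rw [Finset.sum_ite, Finset.sum_const, Finset.sum_const]
      have h1 := Finset.card_filter_add_card_filter_not
        (s := Finset.Ioc 0 E) (p := fun k => E ∣ h*k)
      rw [dvd_count E h hE hh] at h1
      rw [Int.card_Ioc] at h1
      have h2 : (Int.gcd E h : ℤ) ≤ E :=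
        Int.le_of_dvd hE (Int.gcd_dvd_left E h)
      have h3 : ((E - 0).toNat : ℤ) = E := by omega
      simp only [nsmul_eq_mul, smul_eq_mul, mul_zero, mul_one, zero_add]
      omega
    rw [hsum_ite]
    have h3 : ((E - 0).toNat : ℤ) = E := by omega
    simp only [nsmul_eq_mul, smul_eq_mul]
    rw [h3]
  have hB : ∑ k ∈ Finset.Ioc 0 E, (f k + f (E - k))
      = ∑ k ∈ Finset.Ioc 0 E, f k + ∑ k ∈ Finset.Ioc 0 E, f (E - k) :=
    Finset.sum_add_distrib
  linarith [hpair, hB, hrefl, hsplit, hf0, hfE]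

lemma chain_le (x' : ℕ → ℤ) : ∀ n, (∀ i, i < n → x' i ≤ x' (i+1)) → x' 0 ≤ x' n := by
  intro n
  induction n with
  | zero => intro _; exact le_refl _
  | succ n ih =>
    intro hm
    exact le_trans (ih (fun i hi => hm i (by omega))) (hm n (by omega))

lemma sum_Ioc_partition (x' : ℕ → ℤ) (f : ℤ → ℤ) :
    ∀ n, (∀ i, i < n → x' i ≤ x' (i+1)) →
    ∑ i ∈ Finset.range n, ∑ a ∈ Finset.Ioc (x' i) (x' (i+1)), f a
      = ∑ a ∈ Finset.Ioc (x' 0) (x' n), f a := by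
  intro n
  induction n with
  | zero => intro _; simp
  | succ n ih =>
    intro hm
    rw [Finset.sum_range_succ, ih (fun i hi => hm i (by omega))]
    have h1 : x' 0 ≤ x' n := chain_le x' n (fun i hi => hm i (by omega))
    have h2 : x' n ≤ x' (n+1) := hm n (by omega)
    have hdisj : Disjoint (Finset.Ioc (x' 0) (x' n)) (Finset.Ioc (x' n) (x' (n+1))) := by
      rw [Finset.disjoint_left]
      intro a ha hb
      simp only [Finset.mem_Ioc] at ha hb
      omega
    rw [← Finset.sum_union hdisj, Finset.Ioc_union_Ioc_eq_Ioc h1 h2]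

lemma telescope_Ico (f : ℕ → ℤ) :
    ∀ n i, i ≤ n → ∑ j ∈ Finset.Ico i n, (f j - f (j+1)) = f i - f n := by
  intro n
  induction n with
  | zero => intro i hi; interval_cases i; simp
  | succ n ih =>
    intro i hi
    rcases Nat.lt_or_ge i (n+1) with h | h
    · have h' : i ≤ n := by omega
      rw [Finset.sum_Ico_succ_top h', ih i h']
      ring
    · have : i = n + 1 := by omega
      subst this
      simp

lemma even_comb (E h : ℤ) :
    (2:ℤ) ∣ (E * h - E - h + Int.gcd E h) := by
  have hgE : (↑(Int.gcd E h):ℤ) ∣ E := Int.gcd_dvd_left E h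
  have hgh : (↑(Int.gcd E h):ℤ) ∣ h := Int.gcd_dvd_right E h
  by_cases hE2 : (2:ℤ) ∣ E <;> by_cases hh2 : (2:ℤ) ∣ h
  · have hg2 : (2:ℤ) ∣ (Int.gcd E h : ℤ) := Int.dvd_coe_gcd hE2 hh2
    have hEh : (2:ℤ) ∣ E * h := hE2.mul_right h
    omega
  · have hg2 : ¬ (2:ℤ) ∣ (Int.gcd E h : ℤ) := fun hg => hh2 (hg.trans hgh)
    have hEh : (2:ℤ) ∣ E * h := hE2.mul_right h
    omega
  · have hg2 : ¬ (2:ℤ) ∣ (Int.gcd E h : ℤ) := fun hg => hE2 (hg.trans hgE)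
    have hEh : (2:ℤ) ∣ E * h := hh2.mul_left E
    omega
  · have hg2 : ¬ (2:ℤ) ∣ (Int.gcd E h : ℤ) := fun hg => hE2 (hg.trans hgE)
    have hEh : ¬ (2:ℤ) ∣ E * h := by
      intro hc
      rcases ((Int.prime_two.dvd_mul).mp hc) with h1 | h1
      · exact hE2 h1
      · exact hh2 h1
    omega



/-- **The index of a principal polygon counts lattice points.**
Let `(x_0,y_0), …, (x_t,y_t) ∈ ℤ²` with `0 = x_0 < x_1 < … < x_t`, `y_0 > y_1 > … > y_t`,
and strictly increasing slopes, and let `N` be the piecewise linear (convex) function with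
these vertices.  With `E_i = x_i − x_{i−1}`, `H_i = y_{i−1} − y_i`, `d_i = gcd(E_i, H_i)`,
the number of lattice points `(a,b)` with `1 ≤ a ≤ x_t`, `b > y_t` and `b ≤ N(a)` equals
`Σ_i (E_iH_i − E_i − H_i + d_i)/2 + Σ_{i<j} E_iH_j`, the index `ind(N)` of the polygon. -/
theorem stmt_13 (t : ℕ) (ht : 1 ≤ t) (x y : Fin (t + 1) → ℤ)
    (hx0 : x 0 = 0) (hx : StrictMono x) (hy : StrictAnti y)
    (hslopes : ∀ i j : Fin t, i < j →
      ((y i.succ - y i.castSucc : ℚ) / (x i.succ - x i.castSucc : ℚ))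
        < ((y j.succ - y j.castSucc : ℚ) / (x j.succ - x j.castSucc : ℚ)))
    (N : ℚ → ℚ)
    (hN : ∀ i : Fin t, ∀ a : ℚ, (x i.castSucc : ℚ) ≤ a → a ≤ (x i.succ : ℚ) →
      N a = (y i.castSucc : ℚ)
        + ((y i.succ : ℚ) - (y i.castSucc : ℚ)) / ((x i.succ : ℚ) - (x i.castSucc : ℚ))
          * (a - (x i.castSucc : ℚ)))
    (E H : Fin t → ℤ)
    (hE : ∀ i, E i = x i.succ - x i.castSucc)
    (hH : ∀ i, H i = y i.castSucc - y i.succ)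
    (d : Fin t → ℤ) (hd : ∀ i, d i = Int.gcd (E i) (H i)) :
    ({q : ℤ × ℤ | 1 ≤ q.1 ∧ q.1 ≤ x (Fin.last t) ∧ y (Fin.last t) < q.2
        ∧ (q.2 : ℚ) ≤ N (q.1 : ℚ)}.ncard : ℤ)
      = ∑ i, (E i * H i - E i - H i + d i) / 2
        + ∑ i, ∑ j, (if i < j then E i * H j else 0) := by
  classical
  -- ℕ-indexed versions of the data
  set x' : ℕ → ℤ := fun n => x ⟨min n t, Nat.lt_succ_of_le (min_le_right n t)⟩ with hx'def
  set y' : ℕ → ℤ := fun n => y ⟨min n t, Nat.lt_succ_of_le (min_le_right n t)⟩ with hy'def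
  set E' : ℕ → ℤ := fun n => x' (n+1) - x' n with hE'def
  set H' : ℕ → ℤ := fun n => y' n - y' (n+1) with hH'def
  have hx'eq : ∀ n (hn : n ≤ t), x' n = x ⟨n, by omega⟩ := by
    intro n hn
    show x _ = x _
    congr 1
    exact Fin.ext (by simp [min_eq_left hn])
  have hy'eq : ∀ n (hn : n ≤ t), y' n = y ⟨n, by omega⟩ := by
    intro n hn
    show y _ = y _
    congr 1
    exact Fin.ext (by simp [min_eq_left hn])
  have hx'0 : x' 0 = 0 := by
    rw [hx'eq 0 (by omega)]
    exact (congrArg x (Fin.ext rfl)).trans hx0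
  have hx'last : x (Fin.last t) = x' t := by
    rw [hx'eq t le_rfl]; exact congrArg x (Fin.ext rfl)
  have hy'last : y (Fin.last t) = y' t := by
    rw [hy'eq t le_rfl]; exact congrArg y (Fin.ext rfl)
  have hx'lt : ∀ i j, i < j → j ≤ t → x' i < x' j := by
    intro i j hij hjt
    rw [hx'eq i (by omega), hx'eq j hjt]
    exact hx (by simp [Fin.mk_lt_mk]; omega)
  have hy'gt : ∀ i j, i < j → j ≤ t → y' j < y' i := by
    intro i j hij hjt
    rw [hy'eq i (by omega), hy'eq j hjt]
    exact hy (by simp [Fin.mk_lt_mk]; omega)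
  have hEpos : ∀ i, i < t → 0 < E' i := fun i hi =>
    sub_pos.mpr (hx'lt i (i+1) (by omega) (by omega))
  have hHpos : ∀ i, i < t → 0 < H' i := fun i hi =>
    sub_pos.mpr (hy'gt i (i+1) (by omega) (by omega))
  -- identification of E, H, d with ℕ-indexed versions
  have hxc : ∀ (i : Fin t), x i.castSucc = x' i.val := by
    intro i
    rw [hx'eq i.val (by omega)]
    congr 1
  have hxs : ∀ (i : Fin t), x i.succ = x' (i.val+1) := by
    intro i
    rw [hx'eq (i.val+1) (by omega)]
    congr 1
  have hyc : ∀ (i : Fin t), y i.castSucc = y' i.val := by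
    intro i
    rw [hy'eq i.val (by omega)]
    congr 1
  have hys : ∀ (i : Fin t), y i.succ = y' (i.val+1) := by
    intro i
    rw [hy'eq (i.val+1) (by omega)]
    congr 1
  have hEE : ∀ (i : Fin t), E i = E' i.val := by
    intro i; rw [hE i, hxc i, hxs i]
  have hHH : ∀ (i : Fin t), H i = H' i.val := by
    intro i; rw [hH i, hyc i, hys i]
  have hdd : ∀ (i : Fin t), d i = (Int.gcd (E' i.val) (H' i.val) : ℤ) := by
    intro i; rw [hd i, hEE i, hHH i]
  -- floor of N on each segment
  have hseg : ∀ i, i < t → ∀ a : ℤ, x' i < a → a ≤ x' (i+1) →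
      ⌊N ((a:ℤ):ℚ)⌋ = y' i - ⌈(↑(H' i * (a - x' i)) : ℚ)/((E' i : ℤ):ℚ)⌉ := by
    intro i hi a h1 h2
    have hEp := hEpos i hi
    have hHp := hHpos i hi
    have hE0 : ((E' i : ℤ):ℚ) ≠ 0 := by exact_mod_cast hEp.ne'
    set fi : Fin t := ⟨i, hi⟩ with hfi
    have hNa := hN fi ((a:ℤ):ℚ)
      (by rw [hxc fi]; exact_mod_cast h1.le)
      (by rw [hxs fi]; exact_mod_cast h2)
    rw [hxc fi, hxs fi, hyc fi, hys fi] at hNa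
    have hrw : N ((a:ℤ):ℚ) = ((y' i : ℤ):ℚ)
        + (-((↑(H' i * (a - x' i)) : ℚ)/((E' i : ℤ):ℚ))) := by
      rw [hNa]
      show _ = ((y' i : ℤ):ℚ) + (-((↑((y' i - y' (i+1)) * (a - x' i)) : ℚ)
        /((x' (i+1) - x' i : ℤ):ℚ)))
      have hEq : ((x' (i+1) - x' i : ℤ):ℚ) ≠ 0 := hE0
      simp only [hfi, Fin.val_mk]
      push_cast at hEq ⊢
      field_simp
      ring
    rw [hrw, Int.floor_intCast_add, Int.floor_neg]; ring
  -- lower bound for the floor on each segment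
  have hsegge : ∀ i, i < t → ∀ a : ℤ, x' i < a → a ≤ x' (i+1) →
      y' t ≤ ⌊N ((a:ℤ):ℚ)⌋ := by
    intro i hi a h1 h2
    rw [hseg i hi a h1 h2]
    have hEp := hEpos i hi
    have hHp := hHpos i hi
    have hceil : ⌈(↑(H' i * (a - x' i)) : ℚ)/((E' i : ℤ):ℚ)⌉ ≤ H' i := by
      rw [Int.ceil_le]
      rw [div_le_iff₀ (by exact_mod_cast hEp)]
      push_cast
      have hq1 : ((a:ℤ):ℚ) - ((x' i : ℤ):ℚ) ≤ ((E' i : ℤ):ℚ) := by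
        have : a - x' i ≤ E' i := by simp only [hE'def]; omega
        exact_mod_cast this
      have hq2 : (0:ℚ) ≤ ((H' i : ℤ):ℚ) := by exact_mod_cast hHp.le
      nlinarith
    have hyt : y' t ≤ y' (i+1) := by
      rcases Nat.lt_or_ge (i+1) t with h | h
      · exact (hy'gt (i+1) t h le_rfl).le
      · have : i + 1 = t := by omega
        rw [this]
    have hH'i : y' i - H' i = y' (i+1) := by simp only [hH'def]; ring
    omega
  have hcover : ∀ a : ℤ, 0 < a → a ≤ x' t → ∃ i, i < t ∧ x' i < a ∧ a ≤ x' (i+1) := by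
    have main : ∀ n, n ≤ t → ∀ a : ℤ, 0 < a → a ≤ x' n →
        ∃ i, i < n ∧ x' i < a ∧ a ≤ x' (i+1) := by
      intro n
      induction n with
      | zero => intro _ a ha hle; rw [hx'0] at hle; omega
      | succ n ih =>
        intro hn a ha hle
        by_cases hc : a ≤ x' n
        · obtain ⟨i, h1, h2, h3⟩ := ih (by omega) a ha hc
          exact ⟨i, by omega, h2, h3⟩
        · exact ⟨n, by omega, by omega, hle⟩
    intro a ha hle
    exact main t le_rfl a ha hle
  have hflo : ∀ a : ℤ, 0 < a → a ≤ x' t → y' t ≤ ⌊N ((a:ℤ):ℚ)⌋ := by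
    intro a ha hle
    obtain ⟨i, hi, h1, h2⟩ := hcover a ha hle
    exact hsegge i hi a h1 h2
  -- the set as a finset
  set F : Finset (ℤ × ℤ) := (Finset.Ioc (0:ℤ) (x' t)).biUnion
    (fun a => ({a} : Finset ℤ) ×ˢ Finset.Ioc (y' t) ⌊N ((a:ℤ):ℚ)⌋) with hFdef
  have hset : {q : ℤ × ℤ | 1 ≤ q.1 ∧ q.1 ≤ x (Fin.last t) ∧ y (Fin.last t) < q.2
      ∧ (q.2 : ℚ) ≤ N (q.1 : ℚ)} = ↑F := by
    ext ⟨a, b⟩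
    simp only [Set.mem_setOf_eq, hFdef, Finset.coe_biUnion, Set.mem_iUnion,
      Finset.mem_coe, Finset.mem_Ioc, Finset.mem_product, Finset.mem_singleton,
      hx'last, hy'last]
    constructor
    · rintro ⟨h1, h2, h3, h4⟩
      refine ⟨a, ⟨by omega, h2⟩, rfl, h3, ?_⟩
      exact Int.le_floor.mpr h4
    · rintro ⟨a', ⟨ha1, ha2⟩, rfl, hb1, hb2⟩
      exact ⟨by omega, ha2, hb1, Int.le_floor.mp hb2⟩
  have hdisjF : ∀ a ∈ Finset.Ioc (0:ℤ) (x' t), ∀ b ∈ Finset.Ioc (0:ℤ) (x' t), a ≠ b →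
      Disjoint (({a} : Finset ℤ) ×ˢ Finset.Ioc (y' t) ⌊N ((a:ℤ):ℚ)⌋)
        (({b} : Finset ℤ) ×ˢ Finset.Ioc (y' t) ⌊N ((b:ℤ):ℚ)⌋) := by
    intro a _ b _ hab
    rw [Finset.disjoint_left]
    rintro ⟨u, v⟩ hu hv
    simp only [Finset.mem_product, Finset.mem_singleton] at hu hv
    exact hab (hu.1 ▸ hv.1 ▸ rfl)
  have hcardF : (F.card : ℤ) = ∑ a ∈ Finset.Ioc (0:ℤ) (x' t), (⌊N ((a:ℤ):ℚ)⌋ - y' t) := by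
    rw [hFdef, Finset.card_biUnion hdisjF]
    push_cast
    apply Finset.sum_congr rfl
    intro a ha
    simp only [Finset.mem_Ioc] at ha
    rw [Finset.card_product, Finset.card_singleton, one_mul, Int.card_Ioc]
    exact Int.toNat_of_nonneg (by have := hflo a ha.1 ha.2; omega)
  rw [hset, Set.ncard_coe_finset, hcardF]
  -- partition into segments
  have hmono : ∀ i, i < t → x' i ≤ x' (i+1) := fun i hi =>
    (hx'lt i (i+1) (by omega) (by omega)).le
  have hpart : ∑ a ∈ Finset.Ioc (0:ℤ) (x' t), (⌊N ((a:ℤ):ℚ)⌋ - y' t)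
      = ∑ i ∈ Finset.range t, ∑ a ∈ Finset.Ioc (x' i) (x' (i+1)), (⌊N ((a:ℤ):ℚ)⌋ - y' t) := by
    conv_lhs => rw [← hx'0]
    exact (sum_Ioc_partition x' _ t hmono).symm
  rw [hpart]
  -- per-segment doubled sum
  have hsegsum : ∀ i, i < t →
      2 * (∑ a ∈ Finset.Ioc (x' i) (x' (i+1)), (⌊N ((a:ℤ):ℚ)⌋ - y' t))
      = 2 * (E' i * (y' i - y' t))
        - (E' i * H' i + E' i + H' i - Int.gcd (E' i) (H' i)) := by
    intro i hi
    have hmap : ∑ a ∈ Finset.Ioc (x' i) (x' (i+1)), (⌊N ((a:ℤ):ℚ)⌋ - y' t)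
        = ∑ k ∈ Finset.Ioc (0:ℤ) (E' i), (⌊N ((x' i + k : ℤ):ℚ)⌋ - y' t) := by
      have h1 : Finset.Ioc (x' i) (x' (i+1))
          = (Finset.Ioc (0:ℤ) (E' i)).map (addLeftEmbedding (x' i)) := by
        rw [Finset.map_add_left_Ioc]
        congr 1
        · ring
        · simp only [hE'def]; ring
      rw [h1, Finset.sum_map]
      apply Finset.sum_congr rfl
      intro k _
      simp [addLeftEmbedding_apply]
    rw [hmap]
    have h2 : ∀ k ∈ Finset.Ioc (0:ℤ) (E' i), (⌊N ((x' i + k : ℤ):ℚ)⌋ - y' t)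
        = (y' i - y' t) - ⌈(↑(H' i * k):ℚ)/((E' i : ℤ):ℚ)⌉ := by
      intro k hk
      simp only [Finset.mem_Ioc] at hk
      have hle : x' i + k ≤ x' (i+1) := by
        have : E' i = x' (i+1) - x' i := by simp only [hE'def]
        omega
      rw [hseg i hi (x' i + k) (by omega) hle]
      have h3 : x' i + k - x' i = k := by ring
      rw [h3]
      ring
    rw [Finset.sum_congr rfl h2, Finset.sum_sub_distrib, Finset.sum_const, Int.card_Ioc]
    have hc : ((E' i - 0).toNat : ℤ) = E' i := by have := hEpos i hi; omega
    simp only [nsmul_eq_mul]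
    rw [hc]
    have hcs := ceil_sum_double (E' i) (H' i) (hEpos i hi) (hHpos i hi)
    omega
  -- telescoping
  have htel : ∀ i, i < t → y' i - y' t = ∑ j ∈ Finset.Ico i t, H' j := by
    intro i hi
    have h1 : (∑ j ∈ Finset.Ico i t, H' j) = ∑ j ∈ Finset.Ico i t, (y' j - y' (j+1)) := by
      apply Finset.sum_congr rfl; intro j _; simp only [hH'def]
    rw [h1, telescope_Ico y' t i hi.le]
  -- key identity
  have hkey : ∑ i ∈ Finset.range t, E' i * (y' i - y' t)
      = ∑ i ∈ Finset.range t, E' i * H' i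
        + ∑ i ∈ Finset.range t, ∑ j ∈ Finset.range t, (if i < j then E' i * H' j else 0) := by
    rw [← Finset.sum_add_distrib]
    apply Finset.sum_congr rfl
    intro i hi
    simp only [Finset.mem_range] at hi
    rw [htel i hi, Finset.mul_sum]
    have hICO : Finset.Ico i t = (Finset.range t).filter (fun j => i ≤ j) := by
      ext j
      simp only [Finset.mem_Ico, Finset.mem_range, Finset.mem_filter]
      omega
    rw [hICO, Finset.sum_filter]
    have hsplit2 : ∀ j ∈ Finset.range t, (if i ≤ j then E' i * H' j else 0)
        = (if i = j then E' i * H' j else 0) + (if i < j then E' i * H' j else 0) := by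
      intro j _
      split_ifs <;> omega
    rw [Finset.sum_congr rfl hsplit2, Finset.sum_add_distrib, Finset.sum_ite_eq]
    simp [Finset.mem_range, hi]
  -- RHS conversion Fin → range
  have hR1 : ∑ i : Fin t, (E i * H i - E i - H i + d i)/2
      = ∑ i ∈ Finset.range t,
          (E' i * H' i - E' i - H' i + (Int.gcd (E' i) (H' i) : ℤ))/2 := by
    rw [← Fin.sum_univ_eq_sum_range
      (fun i => (E' i * H' i - E' i - H' i + (Int.gcd (E' i) (H' i):ℤ))/2) t]
    apply Finset.sum_congr rfl
    intro i _
    rw [hEE i, hHH i, hdd i]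
  have hR2 : ∑ i : Fin t, ∑ j : Fin t, (if i < j then E i * H j else 0)
      = ∑ i ∈ Finset.range t, ∑ j ∈ Finset.range t,
          (if i < j then E' i * H' j else 0) := by
    rw [← Fin.sum_univ_eq_sum_range
      (fun i => ∑ j ∈ Finset.range t, (if i < j then E' i * H' j else 0)) t]
    apply Finset.sum_congr rfl
    intro i _
    rw [← Fin.sum_univ_eq_sum_range
      (fun j => (if i.val < j then E' i.val * H' j else 0)) t]
    apply Finset.sum_congr rfl
    intro j _
    rw [hEE i, hHH j]
    congr 1
  rw [hR1, hR2]
  -- doubling and conclusion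
  have hdiv : ∀ i ∈ Finset.range t,
      2 * ((E' i * H' i - E' i - H' i + (Int.gcd (E' i) (H' i):ℤ))/2)
      = E' i * H' i - E' i - H' i + Int.gcd (E' i) (H' i) := fun i _ =>
    Int.mul_ediv_cancel' (even_comb (E' i) (H' i))
  have hL : 2 * ∑ i ∈ Finset.range t,
        (∑ a ∈ Finset.Ioc (x' i) (x' (i+1)), (⌊N ((a:ℤ):ℚ)⌋ - y' t))
      = 2 * ∑ i ∈ Finset.range t, E' i * (y' i - y' t)
        - ∑ i ∈ Finset.range t,
            (E' i * H' i + E' i + H' i - Int.gcd (E' i) (H' i)) := by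
    rw [Finset.mul_sum]
    rw [Finset.sum_congr rfl (fun i hi => hsegsum i (Finset.mem_range.mp hi))]
    rw [Finset.sum_sub_distrib, ← Finset.mul_sum]
  have hRd : 2 * ∑ i ∈ Finset.range t,
        (E' i * H' i - E' i - H' i + (Int.gcd (E' i) (H' i) : ℤ))/2
      = ∑ i ∈ Finset.range t,
          (E' i * H' i - E' i - H' i + (Int.gcd (E' i) (H' i) : ℤ)) := by
    rw [Finset.mul_sum]
    exact Finset.sum_congr rfl hdiv
  have hs1 : ∑ i ∈ Finset.range t, (E' i * H' i + E' i + H' i - (Int.gcd (E' i) (H' i):ℤ))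
      + ∑ i ∈ Finset.range t, (E' i * H' i - E' i - H' i + (Int.gcd (E' i) (H' i):ℤ))
      = 2 * ∑ i ∈ Finset.range t, E' i * H' i := by
    rw [← Finset.sum_add_distrib, Finset.mul_sum]
    apply Finset.sum_congr rfl
    intro i _
    ring
  omega
end

section
/- Let t ≥ 1 and let (x_0, y_0), …, (x_t, y_t) ∈ Z² with 0 = x_0 < x_1 < … < x_t and y_0 > y_1 > … > y_t, with strictly increasing slopes, let N : [0, x_t] → R be the piecewise linear convex function with these vertices, and set E_i = x_i − x_{i−1}, H_i = y_{i−1} − y_i, d_i = gcd(E_i, H_i). Let h be a positive integer such that every side has slope strictly less than −h, i.e. H_i > h·E_i for all i, and set ℓ = x_t. Then the number of points (a, b) ∈ Z² with 1 ≤ a ≤ x_t, b ≤ N(a), and b > y_t + h(x_t − a) equals Σ_{i=1}^{t} (E_iH_i − E_i − H_i + d_i)/2 + Σ_{1 ≤ i < j ≤ t} E_iH_j − hℓ(ℓ−1)/2. -/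
open Finset

lemma aux_div_add_neg_div {e : ℤ} (a : ℤ) (he : 0 < e) :
    a / e + (-a) / e = if e ∣ a then 0 else -1 := by
  by_cases hdvd : e ∣ a
  · obtain ⟨c, rfl⟩ := hdvd
    rw [if_pos ⟨c, rfl⟩, Int.mul_ediv_cancel_left _ he.ne', ← Int.mul_neg,
      Int.mul_ediv_cancel_left _ he.ne']
    ring
  · rw [if_neg hdvd]
    have hq := Int.mul_ediv_add_emod a e
    have hr0 : 0 ≤ a % e := Int.emod_nonneg a he.ne'
    have hrlt : a % e < e := Int.emod_lt_of_pos a he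
    have hrne : a % e ≠ 0 := fun h0 => hdvd (Int.dvd_of_emod_eq_zero h0)
    have h2 : (-a) / e = -(a / e) - 1 := by
      have hrw : -a = (e - a % e) + (-(a / e) - 1) * e := by linear_combination hq
      rw [hrw, Int.add_mul_ediv_right _ _ he.ne',
        Int.ediv_eq_zero_of_lt (by omega) (by omega)]
      ring
    linarith

lemma aux_count_dvd {e g : ℤ} (he : 0 < e) (hg : 0 < g) :
    ∑ k ∈ Ioo (0:ℤ) (g * e), (if e ∣ k then (1:ℤ) else 0) = g - 1 := by
  rw [Finset.sum_boole]
  have himg : (Ioo (0:ℤ) (g * e)).filter (fun k => e ∣ k)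
      = (Ioo (0:ℤ) g).image (fun m => m * e) := by
    ext k
    simp only [mem_filter, mem_Ioo, mem_image]
    constructor
    · rintro ⟨⟨hk0, hke⟩, m, rfl⟩
      refine ⟨m, ⟨?_, ?_⟩, (mul_comm m e)⟩
      · nlinarith
      · nlinarith
    · rintro ⟨m, ⟨hm0, hmg⟩, rfl⟩
      exact ⟨⟨by nlinarith, by nlinarith⟩, ⟨m, mul_comm m e⟩⟩
  rw [himg, Finset.card_image_of_injective _ (mul_left_injective₀ he.ne'), Int.card_Ioo]
  omega

lemma aux_dvd_iff {Ei Hi : ℤ} (hEi : 0 < Ei) (hHi : 0 < Hi) (k : ℤ) :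
    (Ei ∣ Hi * k) ↔ (Ei / (Int.gcd Ei Hi : ℤ)) ∣ k := by
  set g : ℤ := (Int.gcd Ei Hi : ℤ) with hgdef
  have hgcdne : Int.gcd Ei Hi ≠ 0 := by simp [Int.gcd_eq_zero_iff]; omega
  have hgpos : 0 < g := by rw [hgdef]; exact_mod_cast Nat.pos_of_ne_zero hgcdne
  have hge : g * (Ei / g) = Ei := Int.mul_ediv_cancel' (Int.gcd_dvd_left Ei Hi)
  have hgh : g * (Hi / g) = Hi := Int.mul_ediv_cancel' (Int.gcd_dvd_right Ei Hi)
  have hcop : IsCoprime (Ei / g) (Hi / g) := by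
    rw [Int.isCoprime_iff_gcd_eq_one]
    exact Int.gcd_div_gcd_div_gcd (Nat.pos_of_ne_zero hgcdne)
  constructor
  · intro hdvd
    have h1 : g * (Ei / g) ∣ g * ((Hi / g) * k) := by
      rw [hge, ← mul_assoc, hgh]; exact hdvd
    have h2 : (Ei / g) ∣ (Hi / g) * k := (mul_dvd_mul_iff_left hgpos.ne').mp h1
    exact hcop.dvd_of_dvd_mul_left h2
  · rintro ⟨c, rfl⟩
    exact ⟨(Hi / g) * c, by linear_combination c * (Hi / g) * hge - c * (Ei / g) * hgh⟩

lemma aux_two_mul_sum_Ioo {Ei Hi : ℤ} (hEi : 0 < Ei) (hHi : 0 < Hi) :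
    2 * ∑ k ∈ Ioo (0:ℤ) Ei, (-(Hi * k)) / Ei
      = (Ei - 1) * (-Hi - 1) + ((Int.gcd Ei Hi : ℤ) - 1) := by
  have hrefl : ∑ k ∈ Ioo (0:ℤ) Ei, (-(Hi * k)) / Ei
      = ∑ k ∈ Ioo (0:ℤ) Ei, (-(Hi * (Ei - k))) / Ei := by
    refine Finset.sum_nbij' (fun k => Ei - k) (fun k => Ei - k) ?_ ?_ ?_ ?_ ?_ <;>
      intro a ha <;> simp only [mem_Ioo] at * <;> first
        | omega
        | (rw [show Ei - (Ei - a) = a by ring])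
  have hpair : ∀ k ∈ Ioo (0:ℤ) Ei,
      (-(Hi * k)) / Ei + (-(Hi * (Ei - k))) / Ei
        = -Hi - 1 + (if Ei ∣ Hi * k then (1:ℤ) else 0) := by
    intro k _
    have h1 : (-(Hi * (Ei - k))) / Ei = (Hi * k) / Ei + (-Hi) := by
      rw [show -(Hi * (Ei - k)) = Hi * k + (-Hi) * Ei by ring,
        Int.add_mul_ediv_right _ _ hEi.ne']
    have h2 := aux_div_add_neg_div (Hi * k) hEi
    by_cases hdvd : Ei ∣ Hi * k <;> simp [hdvd] at h2 ⊢ <;> linarith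
  have h2sum : 2 * ∑ k ∈ Ioo (0:ℤ) Ei, (-(Hi * k)) / Ei
      = ∑ k ∈ Ioo (0:ℤ) Ei, ((-(Hi * k)) / Ei + (-(Hi * (Ei - k))) / Ei) := by
    rw [Finset.sum_add_distrib, ← hrefl]; ring
  rw [h2sum, Finset.sum_congr rfl hpair, Finset.sum_add_distrib, Finset.sum_const,
    Int.card_Ioo]
  have hcnt : ∑ k ∈ Ioo (0:ℤ) Ei, (if Ei ∣ Hi * k then (1:ℤ) else 0)
      = (Int.gcd Ei Hi : ℤ) - 1 := by
    set g : ℤ := (Int.gcd Ei Hi : ℤ) with hgdef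
    have hgcdne : Int.gcd Ei Hi ≠ 0 := by simp [Int.gcd_eq_zero_iff]; omega
    have hgpos : 0 < g := by rw [hgdef]; exact_mod_cast Nat.pos_of_ne_zero hgcdne
    have hge : g * (Ei / g) = Ei := Int.mul_ediv_cancel' (Int.gcd_dvd_left Ei Hi)
    have hepos : 0 < Ei / g := by nlinarith [hge]
    calc ∑ k ∈ Ioo (0:ℤ) Ei, (if Ei ∣ Hi * k then (1:ℤ) else 0)
        = ∑ k ∈ Ioo (0:ℤ) Ei, (if (Ei / g) ∣ k then (1:ℤ) else 0) :=
          Finset.sum_congr rfl fun k _ => if_congr (aux_dvd_iff hEi hHi k) rfl rfl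
      _ = ∑ k ∈ Ioo (0:ℤ) (g * (Ei / g)), (if (Ei / g) ∣ k then (1:ℤ) else 0) := by
          rw [hge]
      _ = g - 1 := aux_count_dvd hepos hgpos
  have hc : (((Ei - 0 - 1).toNat : ℕ) : ℤ) = Ei - 1 := by omega
  rw [hcnt, nsmul_eq_mul, hc]

lemma aux_floor_div (p q : ℤ) (hq : 0 < q) : ⌊(p : ℚ) / (q : ℚ)⌋ = p / q := by
  have h1 : ((q.toNat : ℕ) : ℚ) = (q : ℚ) := by
    norm_cast
    omega
  rw [← h1, Rat.floor_intCast_div_natCast]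
  rw [Int.toNat_of_nonneg hq.le]

lemma aux_gauss (n : ℕ) :
    2 * ∑ a ∈ Ioc (0:ℤ) (n:ℤ), ((n:ℤ) - a) = (n:ℤ) * ((n:ℤ) - 1) := by
  induction n with
  | zero => simp
  | succ m ih =>
    have hsplit : Ioc (0:ℤ) ((m:ℤ)+1) = insert ((m:ℤ)+1) (Ioc 0 (m:ℤ)) := by
      ext k; simp only [mem_Ioc, mem_insert]; omega
    have hnm : ((m:ℤ)+1) ∉ Ioc (0:ℤ) (m:ℤ) := by simp
    have hrw : ∑ a ∈ Ioc (0:ℤ) (m:ℤ), ((m:ℤ) + 1 - a)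
        = (∑ a ∈ Ioc (0:ℤ) (m:ℤ), ((m:ℤ) - a)) + m := by
      rw [show (∑ a ∈ Ioc (0:ℤ) (m:ℤ), ((m:ℤ) + 1 - a))
          = ∑ a ∈ Ioc (0:ℤ) (m:ℤ), (((m:ℤ) - a) + 1) from
        Finset.sum_congr rfl fun a _ => by ring]
      rw [Finset.sum_add_distrib, Finset.sum_const, Int.card_Ioc]
      simp
    push_cast
    rw [hsplit, Finset.sum_insert hnm, hrw]
    push_cast at ih
    ring_nf
    ring_nf at ih
    linarith

lemma aux_sum_Ioc_consec {M : Type*} [AddCommMonoid M] (f : ℤ → M) {a b c : ℤ}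
    (hab : a ≤ b) (hbc : b ≤ c) :
    ((∑ x ∈ Ioc a b, f x) + ∑ x ∈ Ioc b c, f x) = ∑ x ∈ Ioc a c, f x := by
  rw [← Finset.sum_union ?hd, Finset.Ioc_union_Ioc_eq_Ioc hab hbc]
  case hd =>
    rw [Finset.disjoint_left]
    intro x hx hx'
    simp only [mem_Ioc] at hx hx'
    omega

lemma aux_partition {M : Type*} [AddCommMonoid M] :
    ∀ (n : ℕ) (z : Fin (n+1) → ℤ), Monotone z → ∀ (f : ℤ → M),
    (∑ i : Fin n, ∑ a ∈ Ioc (z i.castSucc) (z i.succ), f a)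
      = ∑ a ∈ Ioc (z 0) (z (Fin.last n)), f a := by
  intro n
  induction n with
  | zero =>
    intro z _ f
    simp [Fin.last]
  | succ m ih =>
    intro z hz f
    rw [Fin.sum_univ_castSucc]
    have h1 : (∑ i : Fin m, ∑ a ∈ Ioc (z (i.castSucc).castSucc) (z (i.castSucc).succ), f a)
        = ∑ a ∈ Ioc (z 0) (z ((Fin.last m).castSucc)), f a := by
      have hmono : Monotone (z ∘ Fin.castSucc) :=
        fun a b hab => hz (Fin.castSucc_le_castSucc_iff.mpr hab)
      have := ih (z ∘ Fin.castSucc) hmono f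
      simp only [Function.comp_apply, Fin.castSucc_zero] at this
      rw [← this]
      exact Finset.sum_congr rfl fun i _ => by rw [Fin.succ_castSucc]
    rw [h1, Fin.succ_last]
    exact aux_sum_Ioc_consec f (hz (Fin.zero_le _)) (hz (Fin.le_last _))

lemma aux_find_segment {n : ℕ} (x : Fin (n+1) → ℤ) (hx : StrictMono x)
    {a : ℤ} (h0 : x 0 < a) (hl : a ≤ x (Fin.last n)) :
    ∃ i : Fin n, x i.castSucc < a ∧ a ≤ x i.succ := by
  classical
  set s := univ.filter (fun j : Fin (n+1) => a ≤ x j) with hs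
  have hne : s.Nonempty := ⟨Fin.last n, by simp [hs, hl]⟩
  have hj0 : a ≤ x (s.min' hne) := (mem_filter.mp (s.min'_mem hne)).2
  have hj0ne : s.min' hne ≠ 0 := by
    intro hzero
    rw [hzero] at hj0
    omega
  obtain ⟨i, hi⟩ := Fin.eq_succ_of_ne_zero hj0ne
  refine ⟨i, ?_, by rw [← hi]; exact hj0⟩
  by_contra hcon
  push_neg at hcon
  have hmem : i.castSucc ∈ s := by rw [hs, mem_filter]; exact ⟨mem_univ _, hcon⟩
  have := s.min'_le _ hmem
  rw [hi] at this
  exact absurd (lt_of_le_of_lt this (@Fin.castSucc_lt_succ _ i)) (lt_irrefl _)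

lemma aux_telescope {n : ℕ} (y : Fin (n+1) → ℤ) (H : Fin n → ℤ)
    (hH : ∀ i, H i = y i.castSucc - y i.succ) (j : Fin (n+1)) :
    y j - y (Fin.last n) = ∑ i : Fin n, (if j ≤ i.castSucc then H i else 0) := by
  induction j using Fin.reverseInduction with
  | last =>
    rw [sub_self]
    symm
    apply Finset.sum_eq_zero
    intro i _
    rw [if_neg]
    intro hle
    exact absurd (lt_of_le_of_lt hle (Fin.castSucc_lt_last i)) (lt_irrefl _)
  | cast j ihj =>
    have key : ∀ i : Fin n, (if j.castSucc ≤ i.castSucc then H i else 0)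
        = (if i = j then H i else 0) + (if j.succ ≤ i.castSucc then H i else 0) := by
      intro i
      have c1 : (j.castSucc ≤ i.castSucc) ↔ j ≤ i := Fin.castSucc_le_castSucc_iff
      have c2 : (j.succ ≤ i.castSucc) ↔ j < i := Fin.succ_le_castSucc_iff
      rcases lt_trichotomy i j with h1 | rfl | h1
      · rw [if_neg (fun hc => absurd (c1.mp hc) (not_le.mpr h1)),
          if_neg (fun hc => absurd (c2.mp hc) (not_lt.mpr h1.le)), if_neg h1.ne]
        simp
      · rw [if_pos (c1.mpr le_rfl), if_neg (fun hc => absurd (c2.mp hc) (lt_irrefl _)),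
          if_pos rfl]
        simp
      · rw [if_pos (c1.mpr h1.le), if_neg (fun hc => absurd hc h1.ne'), if_pos (c2.mpr h1)]
        simp
    rw [Finset.sum_congr rfl (fun i _ => key i), Finset.sum_add_distrib,
      Finset.sum_ite_eq' univ j H, if_pos (mem_univ _), ← ihj, hH j]
    ring

lemma aux_gauss2 {l : ℤ} (hl : 0 ≤ l) :
    2 * ∑ a ∈ Finset.Ioc (0:ℤ) l, (l - a) = l * (l - 1) := by
  obtain ⟨n, rfl⟩ := Int.eq_ofNat_of_zero_le hl
  exact aux_gauss n

open Finset in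
/-- **Lattice-point interpretation of the cut index `ind^h`.**
Let `N` be the piecewise linear convex function with vertices `(x_0,y_0), …, (x_t,y_t)`
(`0 = x_0 < … < x_t`, `y_0 > … > y_t`, strictly increasing slopes), with side lengths
`E_i`, heights `H_i` and degrees `d_i = gcd(E_i,H_i)`.  Let `h > 0` be an integer such that
every side has slope strictly less than `−h`, i.e. `H_i > h·E_i`, and set `ℓ = x_t`.
Then the number of lattice points `(a,b)` with `1 ≤ a ≤ x_t`, `b ≤ N(a)` and
`b > y_t + h(x_t − a)` equals
`Σ_i (E_iH_i − E_i − H_i + d_i)/2 + Σ_{i<j} E_iH_j − hℓ(ℓ−1)/2`. -/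
theorem stmt_15 (t : ℕ) (ht : 1 ≤ t) (x y : Fin (t + 1) → ℤ)
    (hx0 : x 0 = 0) (hx : StrictMono x) (hy : StrictAnti y)
    (hslopes : ∀ i j : Fin t, i < j →
      ((y i.succ - y i.castSucc : ℚ) / (x i.succ - x i.castSucc : ℚ))
        < ((y j.succ - y j.castSucc : ℚ) / (x j.succ - x j.castSucc : ℚ)))
    (N : ℚ → ℚ)
    (hN : ∀ i : Fin t, ∀ a : ℚ, (x i.castSucc : ℚ) ≤ a → a ≤ (x i.succ : ℚ) →
      N a = (y i.castSucc : ℚ)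
        + ((y i.succ : ℚ) - (y i.castSucc : ℚ)) / ((x i.succ : ℚ) - (x i.castSucc : ℚ))
          * (a - (x i.castSucc : ℚ)))
    (E H : Fin t → ℤ)
    (hE : ∀ i, E i = x i.succ - x i.castSucc)
    (hH : ∀ i, H i = y i.castSucc - y i.succ)
    (d : Fin t → ℤ) (hd : ∀ i, d i = Int.gcd (E i) (H i))
    (h : ℕ) (hh : 0 < h)
    (hcut : ∀ i, (h : ℤ) * E i < H i)
    (ℓ : ℤ) (hℓ : ℓ = x (Fin.last t)) :
    ({q : ℤ × ℤ | 1 ≤ q.1 ∧ q.1 ≤ x (Fin.last t)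
        ∧ y (Fin.last t) + (h : ℤ) * (x (Fin.last t) - q.1) < q.2
        ∧ (q.2 : ℚ) ≤ N (q.1 : ℚ)}.ncard : ℤ)
      = ∑ i, (E i * H i - E i - H i + d i) / 2
        + ∑ i, ∑ j, (if i < j then E i * H j else 0)
        - (h : ℤ) * ℓ * (ℓ - 1) / 2 := by
  classical
  have hEpos : ∀ i : Fin t, 0 < E i := fun i => by
    rw [hE i]; exact sub_pos.mpr (hx (@Fin.castSucc_lt_succ _ i))
  have hHpos : ∀ i : Fin t, 0 < H i := fun i => by
    rw [hH i]; exact sub_pos.mpr (hy (@Fin.castSucc_lt_succ _ i))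
  have hℓpos : 0 < ℓ := by
    rw [hℓ, ← hx0]
    exact hx (by simp only [Fin.lt_def, Fin.val_zero, Fin.val_last]; omega)
  set xt := x (Fin.last t) with hxt
  set yt := y (Fin.last t) with hyt
  -- floor formula on each segment
  have hfloor : ∀ i : Fin t, ∀ a : ℤ, x i.castSucc < a → a ≤ x i.succ →
      ⌊N ((a : ℤ) : ℚ)⌋ = y i.castSucc + (-(H i * (a - x i.castSucc))) / E i := by
    intro i a h1 h2
    have hE' : ((x i.succ : ℚ) - (x i.castSucc : ℚ)) = ((E i : ℤ) : ℚ) := by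
      rw [hE i]; push_cast; ring
    have hH' : ((y i.succ : ℚ) - (y i.castSucc : ℚ)) = -((H i : ℤ) : ℚ) := by
      rw [hH i]; push_cast; ring
    have hEne : ((E i : ℤ) : ℚ) ≠ 0 := by exact_mod_cast (hEpos i).ne'
    have hNa := hN i ((a : ℤ) : ℚ) (by exact_mod_cast h1.le) (by exact_mod_cast h2)
    have hval : N ((a : ℤ) : ℚ)
        = ((y i.castSucc * E i + (-(H i * (a - x i.castSucc))) : ℤ) : ℚ) / ((E i : ℤ) : ℚ) := by
      rw [hNa, hE', hH']
      push_cast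
      field_simp
      try ring
    rw [hval, aux_floor_div _ _ (hEpos i),
      show y i.castSucc * E i + (-(H i * (a - x i.castSucc)))
        = (-(H i * (a - x i.castSucc))) + y i.castSucc * E i by ring,
      Int.add_mul_ediv_right _ _ (hEpos i).ne']
    ring
  -- the cutting line lies below the polygon at the vertices
  have hline : ∀ j : Fin (t+1), (h : ℤ) * (xt - x j) ≤ y j - yt := by
    intro j
    induction j using Fin.reverseInduction with
    | last => rw [hxt, hyt]; simp
    | cast j ihj =>
      have key : (h : ℤ) * (xt - x j.castSucc) = (h : ℤ) * (xt - x j.succ) + (h : ℤ) * E j := by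
        rw [hE j]; ring
      have h2 : (h : ℤ) * E j ≤ H j := (hcut j).le
      rw [hH j] at h2
      rw [key]
      linarith [ihj]
  -- the cutting line lies below the polygon everywhere
  have hLle : ∀ i : Fin t, ∀ a : ℤ, x i.castSucc < a → a ≤ x i.succ →
      yt + (h : ℤ) * (xt - a) ≤ ⌊N ((a : ℤ) : ℚ)⌋ := by
    intro i a h1 h2
    rw [hfloor i a h1 h2]
    have hm0 : (0 : ℤ) ≤ x i.succ - a := by linarith
    have hB : (h : ℤ) * (x i.succ - a) ≤ H i + (-(H i * (a - x i.castSucc))) / E i := by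
      have e1 : (-(H i * (a - x i.castSucc)) + H i * E i) / E i
          = (-(H i * (a - x i.castSucc))) / E i + H i :=
        Int.add_mul_ediv_right _ _ (hEpos i).ne'
      have e2 : -(H i * (a - x i.castSucc)) + H i * E i = H i * (x i.succ - a) := by
        rw [hE i]; ring
      have e3 : (h : ℤ) * (x i.succ - a) ≤ (H i * (x i.succ - a)) / E i := by
        rw [Int.le_ediv_iff_mul_le (hEpos i)]
        nlinarith [(hcut i).le, hm0]
      rw [e2] at e1
      linarith [e3, e1.ge]
    have hA := hline i.succ
    have hC : (h : ℤ) * (xt - a) = (h : ℤ) * (xt - x i.succ) + (h : ℤ) * (x i.succ - a) := by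
      ring
    have hHi := hH i
    linarith [hA, hB, hC]
  set F : Finset (ℤ × ℤ) := (Ioc (0 : ℤ) ℓ).biUnion
      (fun a => {a} ×ˢ Ioc (yt + (h : ℤ) * (xt - a)) ⌊N ((a : ℤ) : ℚ)⌋) with hF
  have hset : {q : ℤ × ℤ | 1 ≤ q.1 ∧ q.1 ≤ xt
      ∧ yt + (h : ℤ) * (xt - q.1) < q.2
      ∧ (q.2 : ℚ) ≤ N (q.1 : ℚ)} = ↑F := by
    ext ⟨a, b⟩
    simp only [Set.mem_setOf_eq, Finset.mem_coe, hF, Finset.mem_biUnion, Finset.mem_product,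
      Finset.mem_singleton, Finset.mem_Ioc]
    constructor
    · rintro ⟨ha1, ha2, hb1, hb2⟩
      exact ⟨a, ⟨by omega, by rw [hℓ]; exact ha2⟩, rfl, hb1, Int.le_floor.mpr hb2⟩
    · rintro ⟨a', ⟨ha1, ha2⟩, ha', hb1, hb2⟩
      subst ha'
      exact ⟨by omega, by rw [← hℓ]; exact ha2, hb1, Int.le_floor.mp hb2⟩
  rw [hset, Set.ncard_coe_finset]
  have hdisj : ∀ a ∈ Ioc (0 : ℤ) ℓ, ∀ b ∈ Ioc (0 : ℤ) ℓ, a ≠ b →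
      Disjoint ({a} ×ˢ Ioc (yt + (h : ℤ) * (xt - a)) ⌊N ((a : ℤ) : ℚ)⌋)
        ({b} ×ˢ Ioc (yt + (h : ℤ) * (xt - b)) ⌊N ((b : ℤ) : ℚ)⌋) := by
    intro a _ b _ hab
    rw [Finset.disjoint_left]
    rintro ⟨u, v⟩ hu hv
    simp only [Finset.mem_product, Finset.mem_singleton] at hu hv
    exact hab (hu.1 ▸ hv.1 ▸ rfl)
  have hcard : ∀ a : ℤ, ({a} ×ˢ Ioc (yt + (h : ℤ) * (xt - a)) ⌊N ((a : ℤ) : ℚ)⌋).card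
      = (⌊N ((a : ℤ) : ℚ)⌋ - (yt + (h : ℤ) * (xt - a))).toNat := by
    intro a
    rw [Finset.card_product, Finset.card_singleton, one_mul, Int.card_Ioc]
  have hstep1 : ((F.card : ℕ) : ℤ)
      = ∑ a ∈ Ioc (0 : ℤ) ℓ, (⌊N ((a : ℤ) : ℚ)⌋ - (yt + (h : ℤ) * (xt - a))) := by
    rw [hF, Finset.card_biUnion hdisj, Nat.cast_sum]
    refine Finset.sum_congr rfl fun a ha => ?_
    rw [hcard a]
    rw [mem_Ioc] at ha
    obtain ⟨i, hi1, hi2⟩ := aux_find_segment x hx (by rw [hx0]; exact ha.1)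
      (by rw [← hxt, ← hℓ]; exact ha.2)
    exact Int.toNat_of_nonneg (by linarith [hLle i a hi1 hi2])
  rw [hstep1]
  have hsum1 : ∑ a ∈ Ioc (0 : ℤ) ℓ, (⌊N ((a : ℤ) : ℚ)⌋ - (yt + (h : ℤ) * (xt - a)))
      = (∑ a ∈ Ioc (0 : ℤ) ℓ, (⌊N ((a : ℤ) : ℚ)⌋ - yt))
        - (h : ℤ) * ∑ a ∈ Ioc (0 : ℤ) ℓ, (ℓ - a) := by
    rw [Finset.mul_sum, ← Finset.sum_sub_distrib]
    exact Finset.sum_congr rfl fun a _ => by rw [hℓ, hxt]; ring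
  rw [hsum1]
  have hpart : (∑ a ∈ Ioc (0 : ℤ) ℓ, (⌊N ((a : ℤ) : ℚ)⌋ - yt))
      = ∑ i : Fin t, ∑ a ∈ Ioc (x i.castSucc) (x i.succ), (⌊N ((a : ℤ) : ℚ)⌋ - yt) := by
    rw [aux_partition t x hx.monotone (fun a => ⌊N ((a : ℤ) : ℚ)⌋ - yt), hx0, ← hxt, ← hℓ]
  rw [hpart]
  have hseg : ∀ i : Fin t, ∑ a ∈ Ioc (x i.castSucc) (x i.succ), (⌊N ((a : ℤ) : ℚ)⌋ - yt)
      = (E i) * (y i.castSucc - yt) + ∑ k ∈ Ioc (0 : ℤ) (E i), (-(H i * k)) / E i := by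
    intro i
    have hup : x i.succ = x i.castSucc + E i := by rw [hE i]; ring
    rw [hup, show Ioc (x i.castSucc) (x i.castSucc + E i)
        = Finset.map (addLeftEmbedding (x i.castSucc)) (Ioc (0:ℤ) (E i)) from by
      rw [Finset.map_add_left_Ioc, add_zero], Finset.sum_map]
    simp only [addLeftEmbedding_apply]
    have hterm : ∀ k ∈ Ioc (0 : ℤ) (E i), (⌊N ((x i.castSucc + k : ℤ) : ℚ)⌋ - yt)
        = (y i.castSucc - yt) + (-(H i * k)) / E i := by
      intro k hk
      rw [mem_Ioc] at hk
      rw [hfloor i (x i.castSucc + k) (by omega) (by rw [hup]; omega),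
        show x i.castSucc + k - x i.castSucc = k by ring]
      ring
    rw [Finset.sum_congr rfl hterm, Finset.sum_add_distrib, Finset.sum_const, Int.card_Ioc]
    have hc : (((E i - 0).toNat : ℕ) : ℤ) = E i := by have := hEpos i; omega
    rw [nsmul_eq_mul, hc]
  have hT : ∀ i : Fin t, ∑ k ∈ Ioc (0 : ℤ) (E i), (-(H i * k)) / E i
      = (∑ k ∈ Ioo (0 : ℤ) (E i), (-(H i * k)) / E i) + (- H i) := by
    intro i
    rw [← Finset.Ioo_insert_right (hEpos i), Finset.sum_insert (by simp),
      show -(H i * E i) = (-(H i)) * (E i) by ring, Int.mul_ediv_cancel _ (hEpos i).ne']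
    ring
  have htel : ∀ i : Fin t, y i.castSucc - yt
      = H i + ∑ j : Fin t, (if i < j then H j else 0) := by
    intro i
    rw [hyt, aux_telescope y H hH i.castSucc]
    have key : ∀ j : Fin t, (if i.castSucc ≤ j.castSucc then H j else 0)
        = (if j = i then H j else 0) + (if i < j then H j else 0) := by
      intro j
      have c1 : (i.castSucc ≤ j.castSucc) ↔ i ≤ j := Fin.castSucc_le_castSucc_iff
      rcases lt_trichotomy j i with h1 | rfl | h1
      · rw [if_neg (fun hc => absurd (c1.mp hc) (not_le.mpr h1)), if_neg h1.ne,
          if_neg (fun hc => absurd hc (not_lt.mpr h1.le))]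
        simp
      · rw [if_pos (c1.mpr le_rfl), if_pos rfl, if_neg (lt_irrefl _)]; simp
      · rw [if_pos (c1.mpr h1.le), if_neg h1.ne', if_pos h1]; simp
    rw [Finset.sum_congr rfl (fun j _ => key j), Finset.sum_add_distrib,
      Finset.sum_ite_eq' univ i H, if_pos (mem_univ _)]
  have hnum : ∀ i : Fin t, (E i * H i - E i - H i + d i) / 2
      = (E i) * (y i.castSucc - yt) + (∑ k ∈ Ioc (0 : ℤ) (E i), (-(H i * k)) / E i)
        - ∑ j : Fin t, (if i < j then E i * H j else 0) := by
    intro i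
    have h2m : E i * H i - E i - H i + d i
        = 2 * ((E i) * (y i.castSucc - yt) + (∑ k ∈ Ioc (0 : ℤ) (E i), (-(H i * k)) / E i)
          - ∑ j : Fin t, (if i < j then E i * H j else 0)) := by
      have hDsum : ∑ j : Fin t, (if i < j then E i * H j else 0)
          = E i * ∑ j : Fin t, (if i < j then H j else 0) := by
        rw [Finset.mul_sum]
        exact Finset.sum_congr rfl fun j _ => by split <;> ring
      rw [hT i, htel i, hDsum, hd i]
      have h2Ioo := aux_two_mul_sum_Ioo (hEpos i) (hHpos i)
      ring_nf
      ring_nf at h2Ioo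
      linarith [h2Ioo]
    rw [h2m, Int.mul_ediv_cancel_left _ two_ne_zero]
  rw [show (∑ i : Fin t, (E i * H i - E i - H i + d i) / 2)
      = ∑ i : Fin t, ((E i) * (y i.castSucc - yt)
          + (∑ k ∈ Ioc (0 : ℤ) (E i), (-(H i * k)) / E i)
          - ∑ j : Fin t, (if i < j then E i * H j else 0))
    from Finset.sum_congr rfl fun i _ => hnum i]
  rw [show (∑ i : Fin t, ∑ a ∈ Ioc (x i.castSucc) (x i.succ), (⌊N ((a : ℤ) : ℚ)⌋ - yt))
      = ∑ i : Fin t, ((E i) * (y i.castSucc - yt)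
          + ∑ k ∈ Ioc (0 : ℤ) (E i), (-(H i * k)) / E i)
    from Finset.sum_congr rfl fun i _ => hseg i]
  have hdiv : (h : ℤ) * ℓ * (ℓ - 1) / 2 = (h : ℤ) * ∑ a ∈ Ioc (0 : ℤ) ℓ, (ℓ - a) := by
    rw [show (h : ℤ) * ℓ * (ℓ - 1) = 2 * ((h : ℤ) * ∑ a ∈ Ioc (0 : ℤ) ℓ, (ℓ - a)) by
      linear_combination -(h : ℤ) * (aux_gauss2 hℓpos.le)]
    exact Int.mul_ediv_cancel_left _ two_ne_zero
  rw [hdiv]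
  rw [show (∑ i : Fin t, ((E i) * (y i.castSucc - yt)
        + (∑ k ∈ Ioc (0 : ℤ) (E i), (-(H i * k)) / E i)
        - ∑ j : Fin t, (if i < j then E i * H j else 0)))
      = (∑ i : Fin t, ((E i) * (y i.castSucc - yt)
          + ∑ k ∈ Ioc (0 : ℤ) (E i), (-(H i * k)) / E i))
        - ∑ i : Fin t, ∑ j : Fin t, (if i < j then E i * H j else 0)
    from Finset.sum_sub_distrib _ _]
  ring
end
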